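/- Let N = n·m where n and m are odd natural numbers that are coprime and both different from 1. Then there exists an integer k with 1 ≤ k ≤ N−1 such that k is coprime to N and the (k mod N)-monomial minimal solution of (E_N) is reducible of size 2·n·m. -/
import Mathlib

open Matrix

/-- The elementary matrix `[[a, -1], [1, 0]]` over `ZMod N`. -/
def genMat {N : ℕ} (a : ZMod N) : Matrix (Fin 2) (Fin 2) (ZMod N) :=
  !![a, -1; 1, 0]

/-- `Mword [a₁, …, aₙ]` is the matrix `Mₙ(a₁, …, aₙ) = genMat aₙ * ⋯ * genMat a₁`. -/
def Mword {N : ℕ} (l : List (ZMod N)) : Matrix (Fin 2) (Fin 2) (ZMod N) :=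
  (l.reverse.map genMat).prod

/-- A tuple (encoded as a list) is a solution of `(E_N)` if its matrix is `±Id`. -/
def IsSolutionE {N : ℕ} (l : List (ZMod N)) : Prop :=
  Mword l = 1 ∨ Mword l = -1

/-- The size of the `k`-monomial minimal solution of `(E_N)`: the least positive `n`
such that the constant `n`-tuple `(k, …, k)` is a solution of `(E_N)`. -/
noncomputable def monomialSize (N : ℕ) (k : ZMod N) : ℕ :=
  sInf {n : ℕ | 0 < n ∧ IsSolutionE (List.replicate n k)}

/-- The `k`-monomial minimal solution of `(E_N)`. -/
noncomputable def monoSol (N : ℕ) (k : ZMod N) : List (ZMod N) :=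
  List.replicate (monomialSize N k) k

/-- The sum `⊕` of two tuples:
`(a₁,…,aₘ) ⊕ (b₁,…,bₗ) = (a₁+bₗ, a₂, …, aₘ₋₁, aₘ+b₁, b₂, …, bₗ₋₁)`. -/
def oplus {N : ℕ} (a b : List (ZMod N)) : List (ZMod N) :=
  (a.headD 0 + b.getLastD 0) ::
    ((a.drop 1).dropLast ++ (a.getLastD 0 + b.headD 0) :: (b.drop 1).dropLast)

/-- Two tuples are equivalent (`∼`) if one is obtained from the other by a cyclic
permutation, possibly composed with order reversal. -/
def TupEquiv {N : ℕ} (c d : List (ZMod N)) : Prop :=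
  (∃ i, d = c.rotate i) ∨ (∃ i, d = c.reverse.rotate i)

/-- A tuple is reducible if it is equivalent to a sum `a ⊕ b` where `b` is a solution of
`(E_N)` and both `a`, `b` have length at least `3`. -/
def IsReducibleE {N : ℕ} (c : List (ZMod N)) : Prop :=
  ∃ a b : List (ZMod N), 3 ≤ a.length ∧ 3 ≤ b.length ∧ IsSolutionE b ∧
    TupEquiv c (oplus a b)

/-- An irreducible solution of `(E_N)`: a solution of size at least `3` that is not
reducible (the solution `(0,0)` is not considered irreducible). -/
def IsIrreducibleE {N : ℕ} (c : List (ZMod N)) : Prop :=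
  IsSolutionE c ∧ 3 ≤ c.length ∧ ¬ IsReducibleE c

/-- A reducible solution of `(E_N)`: a solution that is not irreducible. -/
def IsReducibleSol {N : ℕ} (c : List (ZMod N)) : Prop :=
  IsSolutionE c ∧ ¬ IsIrreducibleE c

/-- `N` is monomially irreducible if for every nonzero `k ∈ ZMod N` the `k`-monomial
minimal solution of `(E_N)` is irreducible. -/
def MonomiallyIrreducible (N : ℕ) : Prop :=
  ∀ k : ZMod N, k ≠ 0 → IsIrreducibleE (monoSol N k)

/-- `N` is quasi monomially irreducible if for every integer `k` coprime to `N` the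
`(k mod N)`-monomial minimal solution of `(E_N)` is irreducible. -/
def QuasiMonomiallyIrreducible (N : ℕ) : Prop :=
  ∀ k : ℤ, Int.gcd k (N : ℤ) = 1 → IsIrreducibleE (monoSol N (k : ZMod N))

/-- `N` is semi monomially irreducible: if `N` is even but not divisible by `4`, this
requires that for every integer `a` coprime to `N/2` the `(2a mod N)`-monomial minimal
solution of `(E_N)` is irreducible; otherwise (i.e. `N` odd or divisible by `4`), it
requires the same for every integer `a` coprime to `N`. -/
def SemiMonomiallyIrreducible (N : ℕ) : Prop :=
  if 2 ∣ N ∧ ¬ (4 ∣ N) then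
    ∀ a : ℤ, Int.gcd a ((N / 2 : ℕ) : ℤ) = 1 →
      IsIrreducibleE (monoSol N ((2 * a : ℤ) : ZMod N))
  else
    ∀ a : ℤ, Int.gcd a (N : ℤ) = 1 →
      IsIrreducibleE (monoSol N ((2 * a : ℤ) : ZMod N))

/- ### Auxiliary lemmas -/

lemma fin2_eq_iff {α : Type*} (a b c d e f g h : α) :
    (!![a, b; c, d] = !![e, f; g, h]) ↔ a = e ∧ b = f ∧ c = g ∧ d = h := by
  constructor
  · intro H
    exact ⟨by simpa using congrFun (congrFun H 0) 0, by simpa using congrFun (congrFun H 0) 1,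
      by simpa using congrFun (congrFun H 1) 0, by simpa using congrFun (congrFun H 1) 1⟩
  · rintro ⟨rfl, rfl, rfl, rfl⟩; rfl

lemma neg_fin_two {α : Type*} [Ring α] (a b c d : α) :
    -(!![a, b; c, d]) = !![-a, -b; -c, -d] := by
  ext i j; fin_cases i <;> fin_cases j <;> simp

lemma neg_one_fin_two {α : Type*} [Ring α] :
    (-1 : Matrix (Fin 2) (Fin 2) α) = !![-1, 0; 0, -1] := by
  rw [Matrix.one_fin_two, neg_fin_two]; norm_num

lemma genMat_pow_two {q : ℕ} (j : ℕ) :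
    (genMat (2 : ZMod q)) ^ j
      = !![1 + (j : ZMod q), -(j : ZMod q); (j : ZMod q), 1 - (j : ZMod q)] := by
  induction j with
  | zero => rw [pow_zero, Matrix.one_fin_two, fin2_eq_iff]; norm_num
  | succ j ih =>
      rw [pow_succ, ih, genMat, Matrix.mul_fin_two, fin2_eq_iff]
      push_cast
      refine ⟨by ring, by ring, by ring, by ring⟩

lemma genMat_pow_neg_two {q : ℕ} (j : ℕ) :
    (genMat (-2 : ZMod q)) ^ j =
      !![(-1:ZMod q)^j * (1 + (j:ZMod q)), (-1:ZMod q)^j * (j:ZMod q);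
         (-1:ZMod q)^j * (-(j:ZMod q)), (-1:ZMod q)^j * (1 - (j:ZMod q))] := by
  induction j with
  | zero => rw [pow_zero, Matrix.one_fin_two, fin2_eq_iff]; norm_num
  | succ j ih =>
      rw [pow_succ, ih, genMat, Matrix.mul_fin_two, fin2_eq_iff]
      push_cast
      refine ⟨by ring, by ring, by ring, by ring⟩

lemma two_pow_eq_one {q : ℕ} (j : ℕ) (h0 : (j : ZMod q) = 0) : genMat (2 : ZMod q) ^ j = 1 := by
  rw [genMat_pow_two, h0, Matrix.one_fin_two, fin2_eq_iff]; norm_num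

lemma two_pow_eq_one_imp {q : ℕ} (j : ℕ) (h : genMat (2 : ZMod q) ^ j = 1) : (j : ZMod q) = 0 := by
  rw [genMat_pow_two, Matrix.one_fin_two, fin2_eq_iff] at h
  simpa using h.2.2.1

lemma two_pow_ne_neg_one {q : ℕ} (hq : (2 : ZMod q) ≠ 0) (j : ℕ) :
    genMat (2 : ZMod q) ^ j ≠ -1 := by
  intro h
  rw [genMat_pow_two, neg_one_fin_two, fin2_eq_iff] at h
  have hj : (j : ZMod q) = 0 := by simpa using h.2.2.1
  apply hq
  rw [hj] at h
  linear_combination h.1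

lemma neg_two_pow_eq_one {q : ℕ} (j : ℕ) (he : Even j) (h0 : (j : ZMod q) = 0) :
    genMat (-2 : ZMod q) ^ j = 1 := by
  rw [genMat_pow_neg_two, h0, he.neg_one_pow, Matrix.one_fin_two, fin2_eq_iff]; norm_num

lemma neg_two_pow_eq_neg_one {q : ℕ} (j : ℕ) (he : Odd j) (h0 : (j : ZMod q) = 0) :
    genMat (-2 : ZMod q) ^ j = -1 := by
  rw [genMat_pow_neg_two, h0, he.neg_one_pow, neg_one_fin_two, fin2_eq_iff]; norm_num

lemma neg_two_pow_eq_one_imp {q : ℕ} (hq : (2 : ZMod q) ≠ 0) (j : ℕ)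
    (h : genMat (-2 : ZMod q) ^ j = 1) : Even j ∧ (j : ZMod q) = 0 := by
  rw [genMat_pow_neg_two] at h
  rcases Nat.even_or_odd j with he | ho
  · rw [he.neg_one_pow, Matrix.one_fin_two, fin2_eq_iff] at h
    refine ⟨he, by simpa using h.2.1⟩
  · rw [ho.neg_one_pow, Matrix.one_fin_two, fin2_eq_iff] at h
    have hj : (j : ZMod q) = 0 := by
      have := h.2.1; simpa using neg_eq_zero.1 (by simpa using this)
    rw [hj] at h
    exact absurd (by linear_combination -h.1) hq

lemma neg_two_pow_eq_neg_one_imp {q : ℕ} (hq : (2 : ZMod q) ≠ 0) (j : ℕ)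
    (h : genMat (-2 : ZMod q) ^ j = -1) : Odd j ∧ (j : ZMod q) = 0 := by
  rw [genMat_pow_neg_two] at h
  rcases Nat.even_or_odd j with he | ho
  · rw [he.neg_one_pow, neg_one_fin_two, fin2_eq_iff] at h
    have hj : (j : ZMod q) = 0 := by simpa using h.2.1
    rw [hj] at h
    exact absurd (by linear_combination h.1) hq
  · rw [ho.neg_one_pow, neg_one_fin_two, fin2_eq_iff] at h
    have hj : (j : ZMod q) = 0 := by
      simpa using neg_eq_zero.1 (by simpa using h.2.1)
    exact ⟨ho, hj⟩

lemma Mword_replicate {N : ℕ} (ℓ : ℕ) (a : ZMod N) :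
    Mword (List.replicate ℓ a) = genMat a ^ ℓ := by
  simp [Mword, List.reverse_replicate, List.map_replicate, List.prod_replicate]

lemma crt_inj {n m : ℕ} (hcop : Nat.Coprime n m) [NeZero n] [NeZero m]
    {x y : ZMod (n * m)}
    (h1 : ZMod.castHom (dvd_mul_right n m) (ZMod n) x
        = ZMod.castHom (dvd_mul_right n m) (ZMod n) y)
    (h2 : ZMod.castHom (dvd_mul_left m n) (ZMod m) x
        = ZMod.castHom (dvd_mul_left m n) (ZMod m) y) : x = y := by
  haveI : NeZero (n * m) := ⟨mul_ne_zero (NeZero.ne n) (NeZero.ne m)⟩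
  have key : ∀ z : ZMod (n * m),
      ZMod.castHom (dvd_mul_right n m) (ZMod n) z = 0 →
      ZMod.castHom (dvd_mul_left m n) (ZMod m) z = 0 → z = 0 := by
    intro z hz1 hz2
    rw [show z = ((z.val : ℕ) : ZMod (n*m)) from (ZMod.natCast_zmod_val z).symm] at hz1 hz2 ⊢
    rw [map_natCast, ZMod.natCast_eq_zero_iff] at hz1 hz2
    rw [ZMod.natCast_eq_zero_iff]
    exact hcop.mul_dvd_of_dvd_of_dvd hz1 hz2
  have := key (x - y) (by rw [map_sub, h1, sub_self]) (by rw [map_sub, h2, sub_self])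
  exact sub_eq_zero.mp this

lemma crt_matrix_inj {n m : ℕ} (hcop : Nat.Coprime n m) [NeZero n] [NeZero m]
    {M M' : Matrix (Fin 2) (Fin 2) (ZMod (n * m))}
    (h1 : M.map (ZMod.castHom (dvd_mul_right n m) (ZMod n))
        = M'.map (ZMod.castHom (dvd_mul_right n m) (ZMod n)))
    (h2 : M.map (ZMod.castHom (dvd_mul_left m n) (ZMod m))
        = M'.map (ZMod.castHom (dvd_mul_left m n) (ZMod m))) : M = M' := by
  ext i j
  refine crt_inj hcop ?_ ?_
  · simpa [Matrix.map_apply] using congrFun (congrFun h1 i) j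
  · simpa [Matrix.map_apply] using congrFun (congrFun h2 i) j

lemma map_genMat {N q : ℕ} (f : ZMod N →+* ZMod q) (a : ZMod N) :
    (genMat a).map f = genMat (f a) := by
  ext i j; fin_cases i <;> fin_cases j <;> simp [genMat, Matrix.map_apply]

lemma map_pow_genMat {N q : ℕ} (f : ZMod N →+* ZMod q) (a : ZMod N) (ℓ : ℕ) :
    (genMat a ^ ℓ).map f = genMat (f a) ^ ℓ := by
  rw [← map_genMat f a, ← RingHom.mapMatrix_apply, ← RingHom.mapMatrix_apply, map_pow]

lemma map_one_matrix {N q : ℕ} (f : ZMod N →+* ZMod q) :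
    (1 : Matrix (Fin 2) (Fin 2) (ZMod N)).map f = 1 := by
  rw [← RingHom.mapMatrix_apply, _root_.map_one]

lemma map_neg_one_matrix {N q : ℕ} (f : ZMod N →+* ZMod q) :
    (-1 : Matrix (Fin 2) (Fin 2) (ZMod N)).map f = -1 := by
  rw [← RingHom.mapMatrix_apply, map_neg, _root_.map_one]

theorem stmt_17 (n m : ℕ) (hn : n ≠ 1) (hm : m ≠ 1) (hnodd : Odd n) (hmodd : Odd m)
    (hcop : Nat.Coprime n m) :
    ∃ k : ℕ, 1 ≤ k ∧ k ≤ n * m - 1 ∧ Nat.Coprime k (n * m) ∧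
      IsReducibleSol (monoSol (n * m) (k : ZMod (n * m))) ∧
      monomialSize (n * m) (k : ZMod (n * m)) = 2 * n * m := by
  have hn3 : 3 ≤ n := by rcases hnodd with ⟨t, ht⟩; omega
  have hm3 : 3 ≤ m := by rcases hmodd with ⟨t, ht⟩; omega
  haveI : NeZero n := ⟨by omega⟩
  haveI : NeZero m := ⟨by omega⟩
  haveI : NeZero (n * m) := ⟨by positivity⟩
  have hc2n : Nat.Coprime 2 n := Nat.coprime_two_left.2 hnodd
  have hc2m : Nat.Coprime 2 m := Nat.coprime_two_left.2 hmodd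
  have h2n : (2 : ZMod n) ≠ 0 := by
    intro h
    have h' : ((2 : ℕ) : ZMod n) = 0 := by exact_mod_cast h
    have := (ZMod.natCast_eq_zero_iff 2 n).1 h'
    have := Nat.le_of_dvd (by norm_num) this
    omega
  have h2m : (2 : ZMod m) ≠ 0 := by
    intro h
    have h' : ((2 : ℕ) : ZMod m) = 0 := by exact_mod_cast h
    have := (ZMod.natCast_eq_zero_iff 2 m).1 h'
    have := Nat.le_of_dvd (by norm_num) this
    omega
  -- the value k
  obtain ⟨k0, hk0n, hk0m⟩ := Nat.chineseRemainder hcop 2 (m - 2)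
  set k := k0 % (n * m) with hk_def
  have hkn : k ≡ 2 [MOD n] :=
    (Nat.ModEq.of_dvd (dvd_mul_right n m) (Nat.mod_modEq k0 (n * m))).trans hk0n
  have hkm : k ≡ m - 2 [MOD m] :=
    (Nat.ModEq.of_dvd (dvd_mul_left m n) (Nat.mod_modEq k0 (n * m))).trans hk0m
  have hkcn : ((k : ℕ) : ZMod n) = 2 := by
    have := (ZMod.natCast_eq_natCast_iff _ _ _).2 hkn
    simpa using this
  have hkcm : ((k : ℕ) : ZMod m) = -2 := by
    have h := (ZMod.natCast_eq_natCast_iff _ _ _).2 hkm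
    rw [Nat.cast_sub (by omega)] at h
    simpa [ZMod.natCast_self] using h
  have hklt : k < n * m := Nat.mod_lt _ (by positivity)
  have hk1 : 1 ≤ k := by
    rcases Nat.eq_zero_or_pos k with h0 | h1
    · exfalso
      rw [h0, Nat.cast_zero] at hkcn
      exact h2n hkcn.symm
    · exact h1
  have hkcopn : Nat.Coprime k n := by
    rw [← ZMod.isUnit_iff_coprime, hkcn]
    have : IsUnit ((2 : ℕ) : ZMod n) := (ZMod.isUnit_iff_coprime 2 n).2 hc2n
    simpa using this
  have hkcopm : Nat.Coprime k m := by
    rw [← ZMod.isUnit_iff_coprime, hkcm]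
    have : IsUnit ((2 : ℕ) : ZMod m) := (ZMod.isUnit_iff_coprime 2 m).2 hc2m
    simpa using this.neg
  have hkcop : Nat.Coprime k (n * m) := Nat.Coprime.mul_right hkcopn hkcopm
  -- the value j
  have hc2nm : Nat.Coprime (2 * n) m := Nat.Coprime.mul hc2m hcop
  obtain ⟨j0, hj0a, hj0b⟩ := Nat.chineseRemainder hc2nm n (m - 2)
  set j := j0 % (2 * (n * m)) with hj_def
  have hj2n : j ≡ n [MOD 2 * n] :=
    (Nat.ModEq.of_dvd ⟨m, by ring⟩ (Nat.mod_modEq j0 (2 * (n * m)))).trans hj0a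
  have hjm : j ≡ m - 2 [MOD m] :=
    (Nat.ModEq.of_dvd ⟨2 * n, by ring⟩ (Nat.mod_modEq j0 (2 * (n * m)))).trans hj0b
  have hjn : n ∣ j := by
    have h1 : j ≡ n [MOD n] := Nat.ModEq.of_dvd (dvd_mul_left n 2) hj2n
    have h2 : n ≡ 0 [MOD n] := (Nat.modEq_zero_iff_dvd).2 dvd_rfl
    exact (Nat.modEq_zero_iff_dvd).1 (h1.trans h2)
  have hjodd : Odd j := by
    have h1 : j % 2 = n % 2 := Nat.ModEq.of_dvd (dvd_mul_right 2 n) hj2n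
    rw [Nat.odd_iff, h1, ← Nat.odd_iff]
    exact hnodd
  have hjm2 : m ∣ j + 2 := by
    have h1 : j + 2 ≡ (m - 2) + 2 [MOD m] := Nat.ModEq.add_right 2 hjm
    rw [Nat.sub_add_cancel (by omega)] at h1
    have h2 : m ≡ 0 [MOD m] := (Nat.modEq_zero_iff_dvd).2 dvd_rfl
    exact (Nat.modEq_zero_iff_dvd).1 (h1.trans h2)
  have hjlt : j < 2 * (n * m) := Nat.mod_lt _ (by positivity)
  have hj1 : 1 ≤ j := by
    rcases Nat.eq_zero_or_pos j with h0 | h1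
    · exfalso
      rw [h0] at hjm2
      have := Nat.le_of_dvd (by norm_num) hjm2
      omega
    · exact h1
  have hjub : j + 3 ≤ 2 * (n * m) := by
    by_contra hcon
    push_neg at hcon
    rcases hjodd with ⟨t, ht⟩
    have hcase : j = 2 * (n * m) - 2 ∨ j = 2 * (n * m) - 1 := by omega
    rcases hcase with hc | hc
    · omega
    · have hd1 : n ∣ 2 * (n * m) := ⟨2 * m, by ring⟩
      have hd2 : n ∣ 2 * (n * m) - j := Nat.dvd_sub hd1 hjn
      rw [hc] at hd2
      have : 2 * (n * m) - (2 * (n * m) - 1) = 1 := by omega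
      rw [this] at hd2
      have := Nat.le_of_dvd (by norm_num) hd2
      omega
  have hjcn : ((j : ℕ) : ZMod n) = 0 := (ZMod.natCast_eq_zero_iff j n).2 hjn
  have hjcm : ((j : ℕ) : ZMod m) = -2 := by
    have h := (ZMod.natCast_eq_natCast_iff _ _ _).2 hjm
    rw [Nat.cast_sub (by omega)] at h
    simpa [ZMod.natCast_self] using h
  have hj2cm : ((j + 2 : ℕ) : ZMod m) = 0 := (ZMod.natCast_eq_zero_iff _ m).2 hjm2
  -- notation
  set κ : ZMod (n * m) := ((k : ℕ) : ZMod (n * m)) with hκ_def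
  set πn : ZMod (n * m) →+* ZMod n := ZMod.castHom (dvd_mul_right n m) (ZMod n) with hπn_def
  set πm : ZMod (n * m) →+* ZMod m := ZMod.castHom (dvd_mul_left m n) (ZMod m) with hπm_def
  have hπnκ : πn κ = 2 := by rw [hκ_def, map_natCast]; exact hkcn
  have hπmκ : πm κ = -2 := by rw [hκ_def, map_natCast]; exact hkcm
  -- solution characterization
  have hsol : ∀ ℓ : ℕ, IsSolutionE (List.replicate ℓ κ) ↔ 2 * (n * m) ∣ ℓ := by
    intro ℓ
    rw [IsSolutionE, Mword_replicate]
    constructor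
    · rintro (h | h)
      · have h1 : (genMat κ ^ ℓ).map πn = (1 : Matrix (Fin 2) (Fin 2) (ZMod (n*m))).map πn := by
          rw [h]
        rw [map_pow_genMat, map_one_matrix, hπnκ] at h1
        have hdn : n ∣ ℓ := (ZMod.natCast_eq_zero_iff ℓ n).1 (two_pow_eq_one_imp ℓ h1)
        have h2 : (genMat κ ^ ℓ).map πm = (1 : Matrix (Fin 2) (Fin 2) (ZMod (n*m))).map πm := by
          rw [h]
        rw [map_pow_genMat, map_one_matrix, hπmκ] at h2
        obtain ⟨heven, hzm⟩ := neg_two_pow_eq_one_imp h2m ℓ h2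
        have hdm : m ∣ ℓ := (ZMod.natCast_eq_zero_iff ℓ m).1 hzm
        have hd2 : 2 ∣ ℓ := heven.two_dvd
        have hdnm : n * m ∣ ℓ := hcop.mul_dvd_of_dvd_of_dvd hdn hdm
        exact (Nat.Coprime.mul_right hc2n hc2m).mul_dvd_of_dvd_of_dvd hd2 hdnm
      · exfalso
        have h1 : (genMat κ ^ ℓ).map πn = (-1 : Matrix (Fin 2) (Fin 2) (ZMod (n*m))).map πn := by
          rw [h]
        rw [map_pow_genMat, map_neg_one_matrix, hπnκ] at h1
        exact two_pow_ne_neg_one h2n ℓ h1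
    · intro hdvd
      left
      have hdn : n ∣ ℓ := dvd_trans ⟨2 * m, by ring⟩ hdvd
      have hdm : m ∣ ℓ := dvd_trans ⟨2 * n, by ring⟩ hdvd
      have hd2 : 2 ∣ ℓ := dvd_trans ⟨n * m, by ring⟩ hdvd
      apply crt_matrix_inj hcop
      · rw [map_pow_genMat, map_one_matrix, hπnκ]
        exact two_pow_eq_one ℓ ((ZMod.natCast_eq_zero_iff ℓ n).2 hdn)
      · rw [map_pow_genMat, map_one_matrix, hπmκ]
        exact neg_two_pow_eq_one ℓ (even_iff_two_dvd.2 hd2)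
          ((ZMod.natCast_eq_zero_iff ℓ m).2 hdm)
  -- the size
  have hsize : monomialSize (n * m) κ = 2 * (n * m) := by
    unfold monomialSize
    apply le_antisymm
    · exact Nat.sInf_le ⟨by positivity, (hsol _).2 dvd_rfl⟩
    · refine le_csInf ⟨2 * (n * m), ?_⟩ ?_
      · exact ⟨by positivity, (hsol _).2 dvd_rfl⟩
      rintro x ⟨hx0, hxs⟩
      exact Nat.le_of_dvd hx0 ((hsol x).1 hxs)
  have hms : monoSol (n * m) κ = List.replicate (2 * (n * m)) κ := by rw [monoSol, hsize]
  -- reducibility data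
  set δ : ZMod (n * m) := ((j : ℕ) : ZMod (n * m)) with hδ_def
  have hπnδ : πn δ = 0 := by rw [hδ_def, map_natCast]; exact hjcn
  have hπmδ : πm δ = -2 := by rw [hδ_def, map_natCast]; exact hjcm
  set p := 2 * (n * m) - j - 2 with hp_def
  have hp1 : 1 ≤ p := by omega
  have hpsum : p + j + 2 = 2 * (n * m) := by omega
  set a : List (ZMod (n * m)) := (κ - δ) :: (List.replicate p κ ++ [κ - δ]) with ha_def
  set b : List (ZMod (n * m)) := δ :: (List.replicate j κ ++ [δ]) with hb_def
  have hla : 3 ≤ a.length := by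
    rw [ha_def]
    simp [List.length_append, List.length_replicate]
    omega
  have hlb : 3 ≤ b.length := by
    rw [hb_def]
    simp [List.length_append, List.length_replicate]
    omega
  have hbw : Mword b = genMat δ * (genMat κ ^ j * genMat δ) := by
    rw [hb_def, Mword]
    rw [List.reverse_cons, List.reverse_append, List.reverse_replicate]
    simp [List.map_append, List.prod_append, List.prod_replicate, mul_assoc]
  have hbsol : IsSolutionE b := by
    right
    rw [hbw]
    apply crt_matrix_inj hcop
    · rw [Matrix.map_mul, Matrix.map_mul, map_pow_genMat, map_genMat,
        map_neg_one_matrix, hπnδ, hπnκ, two_pow_eq_one j ((ZMod.natCast_eq_zero_iff j n).2 hjn),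
        one_mul]
      rw [genMat, Matrix.mul_fin_two, neg_one_fin_two, fin2_eq_iff]
      norm_num
    · rw [Matrix.map_mul, Matrix.map_mul, map_pow_genMat, map_genMat,
        map_neg_one_matrix, hπmδ, hπmκ]
      rw [← pow_succ, ← pow_succ']
      exact neg_two_pow_eq_neg_one (j + 2)
        (by rcases hjodd with ⟨t, ht⟩; exact ⟨t + 1, by omega⟩) hj2cm
  have hoplus : oplus a b = List.replicate (2 * (n * m)) κ := by
    rw [oplus, ha_def, hb_def]
    rw [show δ :: (List.replicate j κ ++ [δ]) = (δ :: List.replicate j κ) ++ [δ] by simp,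
        show (κ - δ) :: (List.replicate p κ ++ [κ - δ])
           = ((κ - δ) :: List.replicate p κ) ++ [κ - δ] by simp]
    rw [List.getLastD_concat, List.getLastD_concat]
    simp only [List.headD_cons, List.cons_append, List.drop_succ_cons, List.drop_zero]
    rw [List.dropLast_concat, List.dropLast_concat]
    have h1 : κ - δ + δ = κ := by ring
    rw [h1]
    have : List.replicate p κ ++ κ :: List.replicate j κ
        = List.replicate p κ ++ (List.replicate (j + 1) κ) := by
      congr 1
    rw [this, ← List.replicate_add, show p + (j + 1) = p + j + 1 by ring]
    rw [show (2 * (n * m)) = (p + j + 1) + 1 by omega]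
    rfl
  have htup : TupEquiv (monoSol (n * m) κ) (oplus a b) := by
    left
    exact ⟨0, by rw [List.rotate_zero, hms, hoplus]⟩
  refine ⟨k, hk1, by omega, hkcop, ⟨?_, ?_⟩, by rw [← hκ_def, hsize]; ring⟩
  · rw [← hκ_def, hms]
    exact (hsol _).2 dvd_rfl
  · rw [← hκ_def]
    rintro ⟨-, -, hnred⟩
    exact hnred ⟨a, b, hla, hlb, hbsol, htup⟩
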